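/- For subspaces V, W of a finite-dimensional Euclidean space E, the angle σ(V, W) is strictly positive, i.e. σ(V,W) ∈ (0, 1]. -/

import Mathlib

open scoped InnerProductSpace

/-- The volume of a tuple of vectors: the square root of the determinant of
its Gram matrix. -/
noncomputable def tupleVol {E : Type*} [NormedAddCommGroup E] [InnerProductSpace ℝ E]
    {k : ℕ} (f : Fin k → E) : ℝ :=
  Real.sqrt (Matrix.det (Matrix.of fun i j => (inner ℝ (f i) (f j) : ℝ)))

/-- The angle `σ(V,W)` between two subspaces of a Euclidean space:
`vol(v w)/(vol(v)·vol(w))` for bases `v` of `V ⊓ (V ⊓ W)ᗮ` and `w` of `W ⊓ (V ⊓ W)ᗮ`,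
and `1` if `V ≤ W` or `W ≤ V`. -/
noncomputable def subAngle {E : Type*} [NormedAddCommGroup E] [InnerProductSpace ℝ E]
    [FiniteDimensional ℝ E] (V W : Submodule ℝ E) : ℝ :=
  letI := Classical.propDecidable (V ≤ W ∨ W ≤ V)
  if V ≤ W ∨ W ≤ V then 1
  else
    let v : Fin (Module.finrank ℝ ↥(V ⊓ (V ⊓ W)ᗮ)) → E :=
      fun i => ((Module.finBasis ℝ ↥(V ⊓ (V ⊓ W)ᗮ)) i : E)
    let w : Fin (Module.finrank ℝ ↥(W ⊓ (V ⊓ W)ᗮ)) → E :=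
      fun j => ((Module.finBasis ℝ ↥(W ⊓ (V ⊓ W)ᗮ)) j : E)
    tupleVol (Fin.append v w) / (tupleVol v * tupleVol w)

section Aux

open Matrix Submodule
open scoped RealInnerProductSpace
open scoped MatrixOrder

variable {E : Type*} [NormedAddCommGroup E] [InnerProductSpace ℝ E]

/-- The Gram matrix of a family of vectors. -/
noncomputable def myGram {ι : Type*} (f : ι → E) : Matrix ι ι ℝ :=
  Matrix.of fun i j => (inner ℝ (f i) (f j) : ℝ)

variable {ι : Type*} [Fintype ι]

lemma myGram_quad (f : ι → E) (x : ι → ℝ) :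
    star x ⬝ᵥ (myGram f) *ᵥ x = ⟪∑ i, x i • f i, ∑ i, x i • f i⟫ := by
  simp only [myGram, dotProduct, Matrix.mulVec, star_trivial, Matrix.of_apply,
    inner_sum, sum_inner, real_inner_smul_left, real_inner_smul_right, Finset.mul_sum]
  rw [Finset.sum_comm]
  exact Finset.sum_congr rfl fun i _ => Finset.sum_congr rfl fun j _ => by ring

lemma myGram_isHermitian (f : ι → E) : (myGram f).IsHermitian := by
  ext i j
  simp [myGram, Matrix.conjTranspose_apply, real_inner_comm]

lemma myGram_posSemidef (f : ι → E) : (myGram f).PosSemidef := by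
  refine Matrix.PosSemidef.of_dotProduct_mulVec_nonneg (myGram_isHermitian f) fun x => ?_
  rw [myGram_quad]
  exact real_inner_self_nonneg

lemma myGram_posDef {f : ι → E} (hf : LinearIndependent ℝ f) : (myGram f).PosDef := by
  refine Matrix.PosDef.of_dotProduct_mulVec_pos (myGram_isHermitian f) fun x hx => ?_
  rw [myGram_quad]
  rcases (real_inner_self_nonneg (x := ∑ i, x i • f i)).lt_or_eq with h | h
  · exact h
  · exact absurd (funext fun i => Fintype.linearIndependent_iff.mp hf x
      (inner_self_eq_zero.mp h.symm) i) hx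

variable {n : Type*} [Fintype n] [DecidableEq n]

lemma det_le_one_of_le_one {X : Matrix n n ℝ} (hX : X.PosSemidef)
    (h1 : ((1 : Matrix n n ℝ) - X).PosSemidef) : X.det ≤ 1 := by
  have hdet : X.det = ∏ i, hX.1.eigenvalues i := by
    simpa using hX.1.det_eq_prod_eigenvalues
  rw [hdet]
  refine Finset.prod_le_one (fun i _ => hX.eigenvalues_nonneg i) (fun i _ => ?_)
  set v : n → ℝ := ⇑(hX.1.eigenvectorBasis i) with hvdef
  have hv := h1.dotProduct_mulVec_nonneg v
  have hnorm : star v ⬝ᵥ v = 1 := by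
    have h2 : ⟪hX.1.eigenvectorBasis i, hX.1.eigenvectorBasis i⟫ = (1 : ℝ) := by
      rw [real_inner_self_eq_norm_sq, (hX.1.eigenvectorBasis).orthonormal.1 i]; norm_num
    exact h2
  have heig : hX.1.eigenvalues i = star v ⬝ᵥ X *ᵥ v := by
    have := hX.1.eigenvalues_eq i
    simpa using this
  rw [Matrix.sub_mulVec, dotProduct_sub, Matrix.one_mulVec, hnorm] at hv
  linarith [hv, heig]

lemma det_mono_psd {M N : Matrix n n ℝ} (hM : M.PosSemidef) (hN : N.PosDef)
    (hMN : (N - M).PosSemidef) : M.det ≤ N.det := by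
  set S := CFC.sqrt N with hS
  have hSpsd : S.PosSemidef := Matrix.nonneg_iff_posSemidef.mp (CFC.sqrt_nonneg N)
  have hSS : S * S = N := CFC.sqrt_mul_sqrt_self N hN.posSemidef.nonneg
  have hdetS : S.det * S.det = N.det := by rw [← det_mul, hSS]
  have hdetSpos : 0 < S.det * S.det := hdetS ▸ hN.det_pos
  have hSunit : IsUnit S.det :=
    isUnit_iff_ne_zero.mpr (fun h => by simp [h] at hdetSpos)
  haveI : Invertible S := S.invertibleOfIsUnitDet hSunit
  have hSinvH : (S⁻¹).IsHermitian := hSpsd.1.inv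
  have hXpsd : (S⁻¹ * M * S⁻¹).PosSemidef := by
    have := hM.conjTranspose_mul_mul_same (B := S⁻¹)
    rwa [hSinvH.eq] at this
  have hone : S⁻¹ * N * S⁻¹ = 1 := by
    rw [← hSS]
    simp only [Matrix.mul_assoc]
    rw [Matrix.mul_nonsing_inv S hSunit, Matrix.mul_one, Matrix.nonsing_inv_mul S hSunit]
  have h1X : ((1 : Matrix n n ℝ) - S⁻¹ * M * S⁻¹).PosSemidef := by
    have := hMN.conjTranspose_mul_mul_same (B := S⁻¹)
    rwa [hSinvH.eq, Matrix.mul_sub, Matrix.sub_mul, hone] at this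
  have hXdet : (S⁻¹ * M * S⁻¹).det ≤ 1 := det_le_one_of_le_one hXpsd h1X
  have hMX : S * (S⁻¹ * M * S⁻¹) * S = M := by
    simp only [Matrix.mul_assoc]
    rw [Matrix.nonsing_inv_mul S hSunit, Matrix.mul_one, ← Matrix.mul_assoc,
      Matrix.mul_nonsing_inv S hSunit, Matrix.one_mul]
  calc M.det = S.det * (S⁻¹ * M * S⁻¹).det * S.det := by rw [← hMX, det_mul, det_mul, hMX]
    _ = (S.det * S.det) * (S⁻¹ * M * S⁻¹).det := by ring
    _ ≤ (S.det * S.det) * 1 := mul_le_mul_of_nonneg_left hXdet hdetSpos.le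
    _ = N.det := by rw [mul_one, hdetS]

lemma det_fromBlocks_psd_le {m : Type*} [Fintype m] [DecidableEq m]
    {A : Matrix m m ℝ} {B : Matrix m n ℝ} {D : Matrix n n ℝ} (hA : A.PosDef) (hD : D.PosDef)
    (h : (fromBlocks A B Bᴴ D).PosSemidef) :
    (fromBlocks A B Bᴴ D).det ≤ A.det * D.det := by
  haveI := A.invertibleOfIsUnitDet hA.det_pos.ne'.isUnit
  rw [Matrix.det_fromBlocks₁₁, Matrix.invOf_eq_nonsing_inv]
  have hschur := (Matrix.PosDef.fromBlocks₁₁ B D hA).mp h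
  have hBAB : (Bᴴ * A⁻¹ * B).PosSemidef :=
    (hA.inv.posSemidef).conjTranspose_mul_mul_same (B := B)
  have hsub : (D - (D - Bᴴ * A⁻¹ * B)).PosSemidef := by simpa using hBAB
  exact mul_le_mul_of_nonneg_left (det_mono_psd hschur hD hsub) hA.det_pos.le

lemma li_append {k l : ℕ} {v : Fin k → E} {w : Fin l → E} (hv : LinearIndependent ℝ v)
    (hw : LinearIndependent ℝ w)
    (hdisj : Disjoint (span ℝ (Set.range v)) (span ℝ (Set.range w))) :
    LinearIndependent ℝ (Fin.append v w) := by
  have hsum := hv.sum_type hw hdisj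
  have hcomp : Fin.append v w ∘ finSumFinEquiv = Sum.elim v w := by
    funext j
    rcases j with j | j <;> simp [Fin.append_left, Fin.append_right]
  exact (linearIndependent_equiv' finSumFinEquiv hcomp).mp hsum

lemma gram_append_submatrix {k l : ℕ} (v : Fin k → E) (w : Fin l → E) :
    (myGram (Fin.append v w)).submatrix finSumFinEquiv finSumFinEquiv =
      fromBlocks (myGram v) (Matrix.of fun i j => (inner ℝ (v i) (w j) : ℝ))
        (Matrix.of fun i j => (inner ℝ (v i) (w j) : ℝ))ᴴ (myGram w) := by
  ext i j
  rcases i with i | i <;> rcases j with j | j <;>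
    simp [myGram, fromBlocks, Matrix.submatrix, Matrix.conjTranspose_apply,
      Fin.append_left, Fin.append_right, real_inner_comm]

lemma gram_append_det_le {k l : ℕ} {v : Fin k → E} {w : Fin l → E}
    (hv : LinearIndependent ℝ v) (hw : LinearIndependent ℝ w) :
    (myGram (Fin.append v w)).det ≤ (myGram v).det * (myGram w).det := by
  have hdet := Matrix.det_submatrix_equiv_self finSumFinEquiv (myGram (Fin.append v w))
  rw [gram_append_submatrix] at hdet
  have hpsd := (myGram_posSemidef (Fin.append v w)).submatrix finSumFinEquiv
  rw [gram_append_submatrix] at hpsd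
  rw [← hdet]
  exact det_fromBlocks_psd_le (myGram_posDef hv) (myGram_posDef hw) hpsd

end Aux

/-- The angle between two subspaces is strictly positive and at most `1`:
`σ(V,W) ∈ (0, 1]`. -/
theorem stmt2 {E : Type*} [NormedAddCommGroup E] [InnerProductSpace ℝ E]
    [FiniteDimensional ℝ E] (V W : Submodule ℝ E) :
    0 < subAngle V W ∧ subAngle V W ≤ 1 := by
  rw [subAngle]
  by_cases h : V ≤ W ∨ W ≤ V
  · rw [if_pos h]; norm_num
  · rw [if_neg h]
    set v : Fin (Module.finrank ℝ ↥(V ⊓ (V ⊓ W)ᗮ)) → E :=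
      fun i => ((Module.finBasis ℝ ↥(V ⊓ (V ⊓ W)ᗮ)) i : E) with hvdef
    set w : Fin (Module.finrank ℝ ↥(W ⊓ (V ⊓ W)ᗮ)) → E :=
      fun j => ((Module.finBasis ℝ ↥(W ⊓ (V ⊓ W)ᗮ)) j : E) with hwdef
    have hv : LinearIndependent ℝ v :=
      (Module.finBasis ℝ ↥(V ⊓ (V ⊓ W)ᗮ)).linearIndependent.map'
        (Submodule.subtype _) (Submodule.ker_subtype _)
    have hw : LinearIndependent ℝ w :=
      (Module.finBasis ℝ ↥(W ⊓ (V ⊓ W)ᗮ)).linearIndependent.map'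
        (Submodule.subtype _) (Submodule.ker_subtype _)
    have hvle : Submodule.span ℝ (Set.range v) ≤ V ⊓ (V ⊓ W)ᗮ := by
      rw [Submodule.span_le]
      rintro _ ⟨i, rfl⟩
      exact ((Module.finBasis ℝ ↥(V ⊓ (V ⊓ W)ᗮ)) i).2
    have hwle : Submodule.span ℝ (Set.range w) ≤ W ⊓ (V ⊓ W)ᗮ := by
      rw [Submodule.span_le]
      rintro _ ⟨i, rfl⟩
      exact ((Module.finBasis ℝ ↥(W ⊓ (V ⊓ W)ᗮ)) i).2
    have hdisj0 : Disjoint (V ⊓ (V ⊓ W)ᗮ) (W ⊓ (V ⊓ W)ᗮ) := by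
      rw [disjoint_iff, eq_bot_iff]
      intro x hx
      simp only [Submodule.mem_inf] at hx
      obtain ⟨⟨hxV, hxO⟩, hxW, -⟩ := hx
      exact (Submodule.orthogonal_disjoint (V ⊓ W)).le_bot ⟨⟨hxV, hxW⟩, hxO⟩
    have hli : LinearIndependent ℝ (Fin.append v w) :=
      li_append hv hw (hdisj0.mono hvle hwle)
    have hGv : (0:ℝ) < (myGram v).det := (myGram_posDef hv).det_pos
    have hGw : (0:ℝ) < (myGram w).det := (myGram_posDef hw).det_pos
    have hGa : (0:ℝ) < (myGram (Fin.append v w)).det := (myGram_posDef hli).det_pos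
    have hle := gram_append_det_le hv hw
    have hv_vol : tupleVol v = Real.sqrt (myGram v).det := rfl
    have hw_vol : tupleVol w = Real.sqrt (myGram w).det := rfl
    have ha_vol : tupleVol (Fin.append v w) = Real.sqrt (myGram (Fin.append v w)).det := rfl
    have hposv : 0 < tupleVol v := by rw [hv_vol]; exact Real.sqrt_pos.mpr hGv
    have hposw : 0 < tupleVol w := by rw [hw_vol]; exact Real.sqrt_pos.mpr hGw
    have hposa : 0 < tupleVol (Fin.append v w) := by rw [ha_vol]; exact Real.sqrt_pos.mpr hGa
    constructor
    · exact div_pos hposa (mul_pos hposv hposw)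
    · rw [div_le_one (mul_pos hposv hposw)]
      rw [ha_vol, hv_vol, hw_vol, ← Real.sqrt_mul hGv.le]
      exact Real.sqrt_le_sqrt hle
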